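/- Let U : ℝᵈ → ℝ be differentiable with ∇U Lipschitz with constant L, J a matrix, ξ ∈ {-1,1}, h > 0 with h‖J‖L/2 ≤ 1/2, and x, χ ∈ ℝᵈ. Let y be the unique solution of y + hξJ∇U((x+y)/2) = x - h∇U(x) + √(2h)χ. Then there exists C > 0, depending only on L and ‖J‖ and not on x, χ, h, such that ‖∇U(y)‖ ≤ (1 + Ch)‖∇U(x)‖ + C√(2h)‖χ‖. -/

import Mathlib

theorem implicit_step_gradient_bound (d : ℕ) (L : NNReal)
    (U : EuclideanSpace ℝ (Fin d) → ℝ) (hU : Differentiable ℝ U)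
    (hLip : LipschitzWith L (gradient U))
    (J : EuclideanSpace ℝ (Fin d) →L[ℝ] EuclideanSpace ℝ (Fin d)) :
    ∃ C > 0, ∀ (ξ : ℝ), (ξ = 1 ∨ ξ = -1) →
      ∀ (h : ℝ), 0 < h → h * ‖J‖ * L / 2 ≤ 1 / 2 →
      ∀ (x χ y : EuclideanSpace ℝ (Fin d)),
        y + (h * ξ) • J (gradient U ((2 : ℝ)⁻¹ • (x + y)))
          = x - h • gradient U x + Real.sqrt (2 * h) • χ →
        ‖gradient U y‖ ≤ (1 + C * h) * ‖gradient U x‖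
          + C * Real.sqrt (2 * h) * ‖χ‖ := by
  refine ⟨2 * ((L : ℝ) + 1) * (‖J‖ + 1), by positivity, ?_⟩
  intro ξ hξ h hh hsmall x χ y heq
  set m := (2 : ℝ)⁻¹ • (x + y) with hm
  have hJnn : (0:ℝ) ≤ ‖J‖ := norm_nonneg _
  have hLnn : (0:ℝ) ≤ (L:ℝ) := L.coe_nonneg
  have hξabs : |ξ| = 1 := by rcases hξ with rfl | rfl <;> simp
  -- rearrange
  have hyx : y - x = -(h • gradient U x) + Real.sqrt (2 * h) • χ
      - (h * ξ) • J (gradient U m) := by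
    have := heq
    rw [sub_eq_iff_eq_add] at *
    abel_nf
    abel_nf at heq
    linear_combination (norm := module) heq
  set r := ‖y - x‖ with hr
  set g := ‖gradient U x‖ with hg
  set s := Real.sqrt (2 * h) with hs
  have hsnn : 0 ≤ s := Real.sqrt_nonneg _
  -- bound on ∇U m
  have hmx : m - x = (2:ℝ)⁻¹ • (y - x) := by
    rw [hm]; module
  have hgm : ‖gradient U m‖ ≤ g + (L:ℝ) * (r / 2) := by
    have h1 : ‖gradient U m - gradient U x‖ ≤ (L:ℝ) * ‖m - x‖ :=
      hLip.norm_sub_le m x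
    have h2 : ‖m - x‖ = r / 2 := by
      rw [hmx, norm_smul]; simp [hr]; ring
    calc ‖gradient U m‖ ≤ ‖gradient U x‖ + ‖gradient U m - gradient U x‖ := by
          have := norm_add_le (gradient U x) (gradient U m - gradient U x)
          simpa using this
      _ ≤ g + (L:ℝ) * (r / 2) := by rw [h2] at h1; exact add_le_add_right h1 _
  -- bound on r
  have hrb : r ≤ h * g + s * ‖χ‖ + h * ‖J‖ * (g + (L:ℝ) * (r / 2)) := by
    have : r ≤ ‖h • gradient U x‖ + ‖s • χ‖ + ‖(h * ξ) • J (gradient U m)‖ := by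
      rw [hr, hyx]
      calc ‖-(h • gradient U x) + s • χ - (h * ξ) • J (gradient U m)‖
          ≤ ‖-(h • gradient U x) + s • χ‖ + ‖(h * ξ) • J (gradient U m)‖ :=
            norm_sub_le _ _
        _ ≤ ‖-(h • gradient U x)‖ + ‖s • χ‖ + ‖(h * ξ) • J (gradient U m)‖ := by
            exact add_le_add_left (norm_add_le _ _) _
        _ = _ := by rw [norm_neg]
    have hJb : ‖(h * ξ) • J (gradient U m)‖ ≤ h * ‖J‖ * (g + (L:ℝ) * (r / 2)) := by
      rw [norm_smul]
      have hJe : ‖J (gradient U m)‖ ≤ ‖J‖ * ‖gradient U m‖ := J.le_opNorm _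
      have : |h * ξ| = h := by rw [abs_mul, hξabs, abs_of_pos hh, mul_one]
      rw [Real.norm_eq_abs, this]
      calc h * ‖J (gradient U m)‖ ≤ h * (‖J‖ * ‖gradient U m‖) := by
            exact mul_le_mul_of_nonneg_left hJe hh.le
        _ ≤ h * ‖J‖ * (g + (L:ℝ) * (r / 2)) := by
            rw [mul_assoc]
            exact mul_le_mul_of_nonneg_left
              (mul_le_mul_of_nonneg_left hgm hJnn) hh.le
    have h1 : ‖h • gradient U x‖ = h * g := by
      rw [norm_smul, Real.norm_eq_abs, abs_of_pos hh]
    have h2 : ‖s • χ‖ = s * ‖χ‖ := by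
      rw [norm_smul, Real.norm_eq_abs, abs_of_nonneg hsnn]
    rw [h1, h2] at this
    linarith
  -- solve: since h‖J‖L/2 ≤ 1/2, r ≤ 2h(1+‖J‖)g + 2s‖χ‖
  have hrnn : 0 ≤ r := norm_nonneg _
  have hr2 : r ≤ 2 * (h * (1 + ‖J‖) * g) + 2 * (s * ‖χ‖) := by
    nlinarith [mul_nonneg (mul_nonneg hh.le hJnn) (norm_nonneg (gradient U x)),
      mul_nonneg hh.le (norm_nonneg (gradient U x))]
  -- final
  have hfin : ‖gradient U y‖ ≤ g + (L:ℝ) * r := by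
    have h1 : ‖gradient U y - gradient U x‖ ≤ (L:ℝ) * ‖y - x‖ :=
      hLip.norm_sub_le y x
    have := norm_add_le (gradient U x) (gradient U y - gradient U x)
    simp only [add_sub_cancel] at this
    exact this.trans (add_le_add_right h1 _)
  have hgnn : 0 ≤ g := norm_nonneg _
  have hχnn : 0 ≤ ‖χ‖ := norm_nonneg _
  calc ‖gradient U y‖ ≤ g + (L:ℝ) * r := hfin
    _ ≤ g + (L:ℝ) * (2 * (h * (1 + ‖J‖) * g) + 2 * (s * ‖χ‖)) :=
        add_le_add_right (mul_le_mul_of_nonneg_left hr2 hLnn) _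
    _ ≤ (1 + 2 * ((L : ℝ) + 1) * (‖J‖ + 1) * h) * g
        + 2 * ((L : ℝ) + 1) * (‖J‖ + 1) * s * ‖χ‖ := by
        nlinarith [mul_nonneg hh.le hgnn, mul_nonneg hsnn hχnn,
          mul_nonneg (mul_nonneg hh.le hgnn) hJnn,
          mul_nonneg (mul_nonneg hsnn hχnn) hJnn,
          mul_nonneg (mul_nonneg hh.le hgnn) hLnn]
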